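/- For every n ≥ 3 there exists a prefix-free regular language L with quotient complexity n such that the reverse language L^R has quotient complexity exactly 2^{n−2} + 1. -/

import Mathlib

def leftQuotient {α : Type} (L : Language α) (w : List α) : Language α :=
  {x | w ++ x ∈ L}

/-- The quotient (state) complexity: the number of distinct left quotients of `L`. -/
noncomputable def quotientComplexity {α : Type} (L : Language α) : ℕ :=
  Nat.card (Set.range (leftQuotient L))

/-- The Myhill (syntactic) congruence, restricted to nonempty words. -/
def synRel {α : Type} (L : Language α) (x y : {w : List α // w ≠ []}) : Prop :=
  ∀ u v : List α, u ++ x.1 ++ v ∈ L ↔ u ++ y.1 ++ v ∈ L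

/-- The syntactic complexity: the cardinality of the syntactic semigroup `Σ⁺/≈_L`. -/
noncomputable def syntacticComplexity {α : Type} (L : Language α) : ℕ :=
  Nat.card (Quot (synRel L))

/-- No word of `L` is a proper prefix of another word of `L`. -/
def PrefixFree {α : Type} (L : Language α) : Prop :=
  ∀ x ∈ L, ∀ y ∈ L, x <+: y → x = y

/-- The reverse of a language. -/
def reverseLang {α : Type} (L : Language α) : Language α := {w | w.reverse ∈ L}

namespace St18

variable {p : ℕ}

abbrev F (p : ℕ) := Fin (p + 1) → Fin (p + 1)
abbrev A (p : ℕ) := Option (F p)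

def step (s : Fin (p + 1)) (a : A p) : Fin (p + 1) := a.elim s fun f => f s

def stF (s : Fin (p + 1)) (u : List (A p)) : Fin (p + 1) := u.foldl step s

lemma stF_append (s : Fin (p + 1)) (u v : List (A p)) :
    stF s (u ++ v) = stF (stF s u) v := List.foldl_append ..

@[simp] lemma stF_nil (s : Fin (p + 1)) : stF s ([] : List (A p)) = s := rfl

@[simp] lemma stF_single (s : Fin (p + 1)) (f : F p) : stF s [some f] = f s := rfl

def L (p : ℕ) : Set (List (A p)) :=
  {w | ∃ u, w = u ++ [none] ∧ none ∉ u ∧ stF 0 u = 0}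

lemma L_prefixFree : PrefixFree (L p) := by
  rintro x ⟨u, rfl, hu, -⟩ y ⟨u', rfl, hu', -⟩ ⟨t, ht⟩
  rcases List.eq_nil_or_concat t with rfl | ⟨t', a, rfl⟩
  · simpa using ht
  · exfalso
    have ht' : (u ++ [none] ++ t') ++ [a] = u' ++ [none] := by
      simpa [List.append_assoc] using ht
    have := (List.append_inj' ht' (by simp)).1
    apply hu'
    rw [← this]; simp

def Phi (s : Fin (p + 1)) : Set (List (A p)) :=
  {x | ∃ x', x = x' ++ [none] ∧ none ∉ x' ∧ stF s x' = 0}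

lemma quot_clean {u : List (A p)} (hu : none ∉ u) :
    leftQuotient (L p) u = Phi (stF 0 u) := by
  ext x
  constructor
  · rintro ⟨u', h, hc, h0⟩
    rcases List.eq_nil_or_concat x with rfl | ⟨x', a, rfl⟩
    · exfalso; apply hu; rw [show u = u' ++ [none] by simpa using h]; simp
    · have h' : (u ++ x') ++ [a] = u' ++ [none] := by
        simpa [List.append_assoc] using h
      obtain ⟨h1, h2⟩ := List.append_inj' h' (by simp)
      have ha : a = none := by simpa using h2
      subst ha
      refine ⟨x', List.concat_eq_append .. , ?_, ?_⟩
      · intro hx; exact hc (by rw [← h1]; simp [hx])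
      · rw [← stF_append, h1]; exact h0
  · rintro ⟨x', rfl, hc, h0⟩
    exact ⟨u ++ x', by simp [List.append_assoc], by
      simp only [List.mem_append]; tauto, by rw [stF_append]; exact h0⟩

lemma quot_mem {u : List (A p)} (hu : u ∈ L p) :
    leftQuotient (L p) u = ({[]} : Set (List (A p))) := by
  obtain ⟨u₀, rfl, hc, h0⟩ := hu
  apply Set.eq_singleton_iff_unique_mem.mpr
  refine ⟨⟨u₀, by simp, hc, h0⟩, ?_⟩
  · rintro x ⟨u', h, hc', -⟩
    rcases List.eq_nil_or_concat x with rfl | ⟨x', a, rfl⟩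
    · rfl
    · exfalso
      have h' : ((u₀ ++ [none]) ++ x') ++ [a] = u' ++ [none] := by
        simpa [List.append_assoc] using h
      have := (List.append_inj' h' (by simp)).1
      apply hc'; rw [← this]; simp

lemma quot_junk {u : List (A p)} (hn : none ∈ u) (hu : u ∉ L p) :
    leftQuotient (L p) u = (∅ : Set (List (A p))) := by
  apply Set.eq_empty_iff_forall_notMem.mpr
  rintro x ⟨u', h, hc', h0⟩
  rcases List.eq_nil_or_concat x with rfl | ⟨x', a, rfl⟩
  · exact hu ⟨u', by simpa using h, hc', h0⟩
  · have h' : (u ++ x') ++ [a] = u' ++ [none] := by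
      simpa [List.append_assoc] using h
    have := (List.append_inj' h' (by simp)).1
    apply hc'; rw [← this]; simp [hn]


def gfun (p : ℕ) : Fin (p + 1) ⊕ Bool → Set (List (A p))
  | .inl s => Phi s
  | .inr true => ({[]} : Set (List (A p)))
  | .inr false => (∅ : Set (List (A p)))

lemma nil_not_mem_Phi (s : Fin (p + 1)) : [] ∉ Phi s := by
  rintro ⟨x', h, -, -⟩
  simp at h

lemma Phi_nonempty (s : Fin (p + 1)) :
    [some (Function.const _ 0), none] ∈ Phi s :=
  ⟨[some (Function.const _ 0)], rfl, by simp, by simp⟩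

lemma last_ne_zero_of (s s' : Fin (p + 1)) (h : s ≠ s') : (Fin.last p : Fin (p+1)) ≠ 0 := by
  intro h0
  have hp : p = 0 := by simpa [Fin.ext_iff] using h0
  exact h (Fin.ext (by omega))

lemma Phi_inj : Function.Injective (Phi (p := p)) := by
  intro s s' h
  by_contra hne
  classical
  set f : F p := fun t => if t = s then 0 else Fin.last p with hf
  have hmem : [some f, none] ∈ Phi s := ⟨[some f], rfl, by simp, by simp [hf]⟩
  rw [h] at hmem
  obtain ⟨x', hx, -, h0⟩ := hmem
  have hx' : x' = [some f] := by
    have := (List.append_inj' (by simpa using hx.symm : x' ++ [none] = [some f] ++ [none]) rfl).1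
    simpa using this
  subst hx'
  have : f s' = 0 := by simpa using h0
  rw [hf] at this
  simp only [if_neg (Ne.symm hne)] at this
  exact last_ne_zero_of s s' hne this

lemma gfun_inj : Function.Injective (gfun p) := by
  have hsn : ∀ s : Fin (p+1), Phi s ≠ ({[]} : Set (List (A p))) := by
    intro s h
    have := Phi_nonempty s
    rw [h] at this
    simp at this
  have hse : ∀ s : Fin (p+1), Phi s ≠ (∅ : Set (List (A p))) := by
    intro s h
    have := Phi_nonempty s
    rw [h] at this
    simp at this
  have hne : ({[]} : Set (List (A p))) ≠ (∅ : Set (List (A p))) := by simp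
  rintro (s | (b | b)) (s' | (b' | b')) h <;>
    simp only [gfun] at h <;>
    first
      | (exact congrArg Sum.inl (Phi_inj h))
      | rfl
      | (exact absurd h (hsn _))
      | (exact absurd h (hse _))
      | (exact absurd h.symm (hsn _))
      | (exact absurd h.symm (hse _))
      | (exact absurd h hne)
      | (exact absurd h.symm hne)

lemma range_forward :
    Set.range (leftQuotient (L p)) = Set.range (gfun p) := by
  apply Set.eq_of_subset_of_subset
  · rintro X ⟨u, rfl⟩
    by_cases hn : none ∈ u
    · by_cases hu : u ∈ L p
      · exact ⟨.inr true, (quot_mem hu).symm⟩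
      · exact ⟨.inr false, (quot_junk hn hu).symm⟩
    · exact ⟨.inl (stF 0 u), (quot_clean hn).symm⟩
  · rintro X ⟨c, rfl⟩
    match c with
    | .inl s =>
        refine ⟨[some (Function.const _ s)], ?_⟩
        rw [quot_clean (by simp)]
        simp [gfun]
        exact rfl
    | .inr true =>
        refine ⟨[none], ?_⟩
        rw [quot_mem (u := [none]) ⟨[], by simp, by simp, rfl⟩]
        rfl
    | .inr false =>
        refine ⟨[none, none], ?_⟩
        rw [quot_junk (u := [none, none]) (by simp) ?_]
        · rfl
        · rintro ⟨u₀, h, hc, -⟩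
          have : u₀ = [none] := by
            have := (List.append_inj' (by simpa using h.symm : u₀ ++ [none] = [none] ++ [none]) rfl).1
            simpa using this
          subst this
          simp at hc

lemma card_forward : quotientComplexity (L p) = p + 3 := by
  unfold quotientComplexity
  erw [range_forward, Nat.card_range_of_injective gfun_inj]
  simp [Nat.card_eq_fintype_card]


lemma quot_nil {α : Type} (X : Language α) : leftQuotient X [] = X := rfl

lemma mem_reverseL {w : List (A p)} :
    w ∈ reverseLang (L p) ↔ ∃ v, w = none :: v ∧ none ∉ v ∧ stF 0 v.reverse = 0 := by
  constructor
  · rintro ⟨u, hw, hc, h0⟩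
    refine ⟨u.reverse, ?_, by simpa using hc, by simpa using h0⟩
    have := congrArg List.reverse hw
    simpa using this
  · rintro ⟨v, rfl, hc, h0⟩
    exact ⟨v.reverse, by simp, by simpa using hc, h0⟩

def Qset (T : Set (Fin (p + 1))) : Set (List (A p)) :=
  {x | none ∉ x ∧ stF 0 x.reverse ∈ T}

def Tof (v : List (A p)) : Set (Fin (p + 1)) := {s | stF s v.reverse = 0}

lemma Qset_empty : Qset (∅ : Set (Fin (p + 1))) = (∅ : Set (List (A p))) := by
  ext x; simp [Qset]

lemma quot_rev_clean {v : List (A p)} (hv : none ∉ v) :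
    leftQuotient (reverseLang (L p)) (none :: v) = Qset (Tof v) := by
  ext x
  show (none :: v) ++ x ∈ reverseLang (L p) ↔ _
  rw [show (none :: v) ++ x = none :: (v ++ x) from rfl, mem_reverseL]
  constructor
  · rintro ⟨v', hv', hc, h0⟩
    have hveq : v ++ x = v' := by simpa using hv'
    subst hveq
    refine ⟨fun hx => hc (by simp [hx]), ?_⟩
    show stF (stF 0 x.reverse) v.reverse = 0
    rw [← stF_append, ← List.reverse_append]
    exact h0
  · rintro ⟨hcx, hT⟩
    refine ⟨v ++ x, rfl, ?_, ?_⟩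
    · simp only [List.mem_append]; tauto
    · rw [List.reverse_append, stF_append]; exact hT

lemma quot_rev_junk1 (f : F p) (u : List (A p)) :
    leftQuotient (reverseLang (L p)) (some f :: u) = (∅ : Set (List (A p))) := by
  apply Set.eq_empty_iff_forall_notMem.mpr
  intro x hx
  obtain ⟨v', h, -, -⟩ := mem_reverseL.mp hx
  simp at h

lemma quot_rev_junk2 {u : List (A p)} (hu : none ∈ u) :
    leftQuotient (reverseLang (L p)) (none :: u) = (∅ : Set (List (A p))) := by
  apply Set.eq_empty_iff_forall_notMem.mpr
  intro x hx
  obtain ⟨v', h, hc, -⟩ := mem_reverseL.mp hx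
  have : u ++ x = v' := by simpa using h
  subst this
  exact hc (by simp [hu])

def hfun (p : ℕ) : Option (Set (Fin (p + 1))) → Set (List (A p))
  | none => reverseLang (L p)
  | some T => Qset T

lemma mem_single_Qset (T : Set (Fin (p + 1))) (s : Fin (p + 1)) :
    [some (Function.const (Fin (p + 1)) s)] ∈ Qset T ↔ s ∈ T := by
  simp [Qset]

lemma none_mem_revL : [none] ∈ reverseLang (L p) :=
  mem_reverseL.mpr ⟨[], rfl, by simp, rfl⟩

lemma Qset_inj : Function.Injective (Qset (p := p)) := by
  intro T T' h
  ext s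
  rw [← mem_single_Qset T s, ← mem_single_Qset T' s, h]

lemma hfun_inj : Function.Injective (hfun p) := by
  rintro (_ | T) (_ | T') h
  · rfl
  · exfalso
    have := none_mem_revL (p := p)
    rw [show reverseLang (L p) = hfun p none from rfl, h] at this
    exact this.1 (by simp)
  · exfalso
    have := none_mem_revL (p := p)
    rw [show reverseLang (L p) = hfun p none from rfl, ← h] at this
    exact this.1 (by simp)
  · exact congrArg some (Qset_inj h)

lemma range_reverse :
    Set.range (leftQuotient (reverseLang (L p))) = Set.range (hfun p) := by
  classical
  apply Set.eq_of_subset_of_subset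
  · rintro X ⟨u, rfl⟩
    match u with
    | [] => exact ⟨none, (quot_nil _).symm⟩
    | some f :: u' =>
        exact ⟨some ∅, by simp only [hfun]; rw [quot_rev_junk1, Qset_empty]⟩
    | none :: u' =>
        by_cases hn : none ∈ u'
        · exact ⟨some ∅, by simp only [hfun]; rw [quot_rev_junk2 hn, Qset_empty]⟩
        · exact ⟨some (Tof u'), (quot_rev_clean hn).symm⟩
  · rintro X ⟨c, rfl⟩
    match c with
    | none => exact ⟨[], quot_nil _⟩
    | some T =>
        by_cases hT : T = ∅
        · subst hT
          refine ⟨[some id], ?_⟩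
          simp only [hfun]
          rw [show ([some id] : List (A p)) = some id :: [] from rfl,
            quot_rev_junk1, Qset_empty]
        · obtain ⟨s₀, hs₀⟩ := Set.nonempty_iff_ne_empty.mpr hT
          set f : F p := fun s => if s ∈ T then 0 else Fin.last p with hf
          have hTT : Tof ([some f] : List (A p)) = T := by
            ext s
            simp only [Tof, Set.mem_setOf_eq, List.reverse_cons, List.reverse_nil,
              List.nil_append, stF_single]
            constructor
            · intro h0
              by_contra hs
              rw [hf] at h0
              simp only [if_neg hs] at h0
              have hp : p = 0 := by simpa [Fin.ext_iff] using h0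
              have hss : s = s₀ := by
                have h1 := s.isLt
                have h2 := s₀.isLt
                apply Fin.ext
                omega
              exact hs (hss ▸ hs₀)
            · intro hs
              simp [hf, hs]
          refine ⟨[none, some f], ?_⟩
          simp only [hfun]
          rw [show ([none, some f] : List (A p)) = none :: [some f] from rfl,
            quot_rev_clean (by simp), hTT]

lemma card_reverse : quotientComplexity (reverseLang (L p)) = 2 ^ (p + 1) + 1 := by
  unfold quotientComplexity
  erw [range_reverse, Nat.card_range_of_injective hfun_inj]
  simp [Nat.card_eq_fintype_card, Fintype.card_set]


section Transport

variable {α β : Type} (σ : β ≃ α)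

def transL (X : Language α) : Language β := {w | w.map σ ∈ X}

lemma transL_prefixFree {X : Language α} (h : PrefixFree X) :
    PrefixFree (transL σ X) := by
  intro x hx y hy hxy
  have := h _ hx _ hy (hxy.map σ)
  exact List.map_injective_iff.mpr σ.injective this

lemma quot_transL (w : List β) (X : Language α) :
    leftQuotient (transL σ X) w = transL σ (leftQuotient X (w.map σ)) := by
  ext x
  show (w ++ x).map σ ∈ X ↔ (w.map σ ++ x.map σ) ∈ X
  rw [List.map_append]

lemma map_symm_map (y : List α) : (y.map σ.symm).map σ = y := by
  rw [List.map_map]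
  simp

lemma mem_transL_symm (X : Language α) (y : List α) :
    y.map σ.symm ∈ transL σ X ↔ y ∈ X := by
  show (y.map σ.symm).map σ ∈ X ↔ _
  rw [map_symm_map]

lemma transL_inj : Function.Injective (transL (α := α) (β := β) σ) := by
  intro X X' h
  ext y
  rw [← mem_transL_symm σ X y, ← mem_transL_symm σ X' y, h]

lemma range_transL (X : Language α) :
    Set.range (leftQuotient (transL σ X)) = transL σ '' Set.range (leftQuotient X) := by
  ext Y
  constructor
  · rintro ⟨w, rfl⟩
    exact ⟨leftQuotient X (w.map σ), ⟨_, rfl⟩, (quot_transL σ w X).symm⟩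
  · rintro ⟨Z, ⟨u, rfl⟩, rfl⟩
    refine ⟨u.map σ.symm, ?_⟩
    rw [quot_transL, map_symm_map]

lemma quotC_transL (X : Language α) :
    quotientComplexity (transL σ X) = quotientComplexity X := by
  unfold quotientComplexity
  rw [range_transL, Nat.card_image_of_injective (transL_inj σ)]

lemma reverse_transL (X : Language α) :
    reverseLang (transL σ X) = transL σ (reverseLang X) := by
  ext w
  show w.reverse.map σ ∈ X ↔ (w.map σ).reverse ∈ X
  rw [List.map_reverse]

end Transport

end St18


/-- For every `n ≥ 3` there exists a prefix-free regular language `L` with quotient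
complexity `n` whose reverse has quotient complexity exactly `2^(n-2) + 1`. -/
theorem statement18 (n : ℕ) (hn : 3 ≤ n) :
    ∃ (k : ℕ) (L : Language (Fin k)), PrefixFree L ∧ quotientComplexity L = n ∧
      quotientComplexity (reverseLang L) = 2 ^ (n - 2) + 1 := by
  obtain ⟨p, rfl⟩ : ∃ p, n = p + 3 := ⟨n - 3, by omega⟩
  have σ : Fin ((p + 1) ^ (p + 1) + 1) ≃ St18.A p :=
    finSuccEquivLast.trans (Equiv.optionCongr finFunctionFinEquiv.symm)
  refine ⟨(p + 1) ^ (p + 1) + 1, St18.transL σ (St18.L p), ?_, ?_, ?_⟩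
  · exact St18.transL_prefixFree σ St18.L_prefixFree
  · erw [St18.quotC_transL]
    exact St18.card_forward
  · erw [St18.reverse_transL, St18.quotC_transL]
    have h2 : p + 3 - 2 = p + 1 := by omega
    rw [h2]
    exact St18.card_reverse
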